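/- Let C be an abelian category and X ⊆ C closed under extensions. If T ⊆ C admits a relative generator ω in X with ω ⊆ T^∨_X (condition T3), then T^⊥ ∩ X ⊆ Fac^X_1(T), i.e. every A ∈ T^⊥ ∩ X admits a short exact sequence 0 → K → B → A → 0 with B ∈ T ∩ X and K ∈ X. -/

import Mathlib

open CategoryTheory CategoryTheory.Limits CategoryTheory.Abelian ZeroObject

universe w v u

namespace RelTilting

variable {C : Type u} [Category.{v} C] [Abelian C]

/-- `f`, `g` form a short exact sequence `0 → A → B → D → 0`. -/
def IsSES {A B D : C} (f : A ⟶ B) (g : B ⟶ D) : Prop :=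
  ∃ w : f ≫ g = 0, (ShortComplex.mk f g w).ShortExact

/-- There is a short exact sequence `0 → A → B → D → 0`. -/
def SES (A B D : C) : Prop := ∃ (f : A ⟶ B) (g : B ⟶ D), IsSES f g

/-- A class of objects is closed under extensions. -/
def ExtClosed (P : C → Prop) : Prop :=
  ∀ ⦃A B D : C⦄, SES A B D → P A → P D → P B

/-- A class of objects is closed under direct summands. -/
def SmdClosed (P : C → Prop) : Prop :=
  ∀ (A V : C), P V → (∃ (i : A ⟶ V) (r : V ⟶ A), i ≫ r = 𝟙 A) → P A

/-- A class of objects is closed under finite (binary) direct sums. -/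
def SumClosed (P : C → Prop) : Prop :=
  ∀ (A B : C), P A → P B → P (A ⊞ B)

/-- A class is closed under CoCones (kernels of epis between its objects). -/
def CoConeClosed (P : C → Prop) : Prop :=
  ∀ ⦃A B D : C⦄, SES A B D → P B → P D → P A

/-- A class is left thick. -/
def LeftThick (P : C → Prop) : Prop :=
  ExtClosed P ∧ SmdClosed P ∧ CoConeClosed P

variable [HasExt.{w} C]

/-- `Ext^i(A,B) = 0` for all `i ≥ 1`. -/
def extVanish (A B : C) : Prop := ∀ i : ℕ, 1 ≤ i → Subsingleton (Ext A B i)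

/-- The right orthogonal class `T^⊥`. -/
def rightPerp (T : C → Prop) : C → Prop := fun B => ∀ A, T A → extVanish A B

/-- The left orthogonal class `^⊥S`. -/
def leftPerp (S : C → Prop) : C → Prop := fun A => ∀ B, S B → extVanish A B

/-- `pd_X(M) ≤ n`. -/
def pdLE (T X : C → Prop) (n : ℕ) : Prop :=
  ∀ M, T M → ∀ X', X X' → ∀ k, n < k → Subsingleton (Ext M X' k)

/-- `M` has a finite coresolution of length `n` with middle terms in `B`
and cokernels in `A`, ending in `A ∩ B`. -/
def CoresLen (B A : C → Prop) : ℕ → C → Prop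
  | 0 => fun M => B M ∧ A M
  | (n+1) => fun M => ∃ Y0 N0 : C, B Y0 ∧ A N0 ∧ SES M Y0 N0 ∧ CoresLen B A n N0

/-- The coresolution dimension of `M` (with middle terms in `B`,
cokernels in `A`) equals `n`. -/
def CoresDimEq (B A : C → Prop) (M : C) (n : ℕ) : Prop :=
  CoresLen B A n M ∧ ∀ m : ℕ, m < n → ¬ CoresLen B A m M

/-- Specification of an infinite coresolution of `M` with middle terms `Yk`
(in `B ∪ {0}`) and cokernels `Nk` (in `A ∪ {0}`). -/
def InfCoresSpec (B A : C → Prop) (M : C) (Yk Nk : ℕ → C) : Prop :=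
  (∀ k, B (Yk k) ∨ IsZero (Yk k)) ∧ (∀ k, A (Nk k) ∨ IsZero (Nk k)) ∧
    SES M (Yk 0) (Nk 0) ∧ ∀ k, SES (Nk k) (Yk (k+1)) (Nk (k+1))

/-- `M` has a (possibly infinite) coresolution with middle terms in `B ∪ {0}`
and cokernels in `A ∪ {0}`. -/
def InfCores (B A : C → Prop) (M : C) : Prop :=
  ∃ Yk Nk : ℕ → C, InfCoresSpec B A M Yk Nk

/-- The class `(A,B)^∨_∞`. -/
def PairVeeInf (A B : C → Prop) (M : C) : Prop := A M ∧ InfCores B A M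

/-- `coresdim^A_B(M) ≤ n`, via infinite coresolutions vanishing beyond `n`. -/
def InfCoresDimLE (B A : C → Prop) (M : C) (n : ℕ) : Prop :=
  ∃ Yk Nk : ℕ → C, InfCoresSpec B A M Yk Nk ∧ ∀ k, n < k → IsZero (Yk k)

/-- The class `T^∨` of objects with a finite coresolution by objects of `T`. -/
def Vee (T : C → Prop) : C → Prop := fun M => ∃ n, CoresLen T (fun _ => True) n M

/-- The class `T^∨_X`. -/
def VeeRel (T X : C → Prop) : C → Prop := fun M => ∃ n, CoresLen T X n M

/-- `ω` is a relative generator in `X`. -/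
def RelGen (ω X : C → Prop) : Prop :=
  (∀ W, ω W → X W) ∧ ∀ X0, X X0 → ∃ X' W : C, X X' ∧ ω W ∧ SES X' W X0

/-- `α` is a relative cogenerator in `X`. -/
def RelCogen (α X : C → Prop) : Prop :=
  (∀ I, α I → X I) ∧ ∀ X0, X X0 → ∃ I X' : C, α I ∧ X X' ∧ SES X0 I X'

/-- `f : T' ⟶ Z` is a `T`-precover of `Z`. -/
def IsPrecover (T : C → Prop) {T' Z : C} (f : T' ⟶ Z) : Prop :=
  T T' ∧ ∀ T'' : C, T T'' → ∀ h : T'' ⟶ Z, ∃ k : T'' ⟶ T', k ≫ f = h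

/-- `g : Z ⟶ M` is an `X`-preenvelope of `Z`. -/
def IsPreenvelope (X : C → Prop) {Z M : C} (g : Z ⟶ M) : Prop :=
  X M ∧ ∀ X' : C, X X' → ∀ h : Z ⟶ X', ∃ k : M ⟶ X', g ≫ k = h

/-- The class `Fac^X_n(T)`. -/
def Fac (T X : C → Prop) : ℕ → C → Prop
  | 0 => fun _ => True
  | (n+1) => fun M => ∃ K T1 : C, X K ∧ (T T1 ∧ X T1) ∧ SES K T1 M ∧ Fac T X n K

/-- `Y` is closed by `n`-quotients in `X`. -/
def ClosedByNQuotients (Y X : C → Prop) (n : ℕ) : Prop :=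
  ∀ (K Ymid : ℕ → C), X (K 0) →
    (∀ i, 1 ≤ i → i ≤ n → Y (Ymid i) ∧ X (K i) ∧ SES (K i) (Ymid i) (K (i-1))) →
    Y (K 0)



universe w'

section Helpers

variable (C) in
/-- The composition of the single functor in degree `0` with the homology functor
in degree `0` is isomorphic to the identity functor. -/
noncomputable def singleCompHomology [HasDerivedCategory.{w'} C] :
    DerivedCategory.singleFunctor C 0 ⋙ DerivedCategory.homologyFunctor C 0 ≅ 𝟭 C :=
  Functor.isoWhiskerRight ((SingleFunctors.evaluation C (DerivedCategory C) (0 : ℤ)).mapIso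
      (DerivedCategory.singleFunctorsPostcompQIso C)) (DerivedCategory.homologyFunctor C 0) ≪≫
    Functor.associator _ _ _ ≪≫
    Functor.isoWhiskerLeft _ (DerivedCategory.homologyFunctorFactors C 0) ≪≫
    HomologicalComplex.homologyFunctorSingleIso C (ComplexShape.up ℤ) 0

/-- Underlying morphism in the derived category of a degree `0` Ext element. -/
noncomputable def extHom₀ [HasDerivedCategory.{w'} C] {X Y : C} (α : Ext.{w} X Y 0) :
    (DerivedCategory.singleFunctor C 0).obj X ⟶ (DerivedCategory.singleFunctor C 0).obj Y :=
  (ShiftedHom.homEquiv (C := DerivedCategory C) (((0 : ℕ) : ℤ)) (by simp)).symm α.hom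

/-- The morphism in `C` associated to a degree `0` Ext element. -/
noncomputable def extToHom [HasDerivedCategory.{w'} C] {X Y : C} (α : Ext.{w} X Y 0) :
    X ⟶ Y :=
  (singleCompHomology C).inv.app X ≫
    (DerivedCategory.homologyFunctor C 0).map (extHom₀ α) ≫ (singleCompHomology C).hom.app Y

lemma extHom₀_mk₀ [HasDerivedCategory.{w'} C] {X Y : C} (u : X ⟶ Y) :
    extHom₀ (Ext.mk₀ u) = (DerivedCategory.singleFunctor C 0).map u := by
  dsimp [extHom₀]
  rw [Ext.mk₀_hom]
  exact (ShiftedHom.homEquiv (((0 : ℕ) : ℤ)) (by simp)).symm_apply_apply _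

lemma extToHom_mk₀ [HasDerivedCategory.{w'} C] {X Y : C} (u : X ⟶ Y) :
    extToHom (Ext.mk₀ u) = u := by
  dsimp [extToHom]
  rw [extHom₀_mk₀]
  have := (singleCompHomology C).hom.naturality u
  dsimp at this
  rw [this, Iso.inv_hom_id_app_assoc]

lemma extHom₀_mk₀_comp [HasDerivedCategory.{w'} C] {X Y Z : C} (f : X ⟶ Y)
    (α : Ext.{w} Y Z 0) :
    extHom₀ ((Ext.mk₀ f).comp α (zero_add 0)) =
      (DerivedCategory.singleFunctor C 0).map f ≫ extHom₀ α := by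
  dsimp [extHom₀]
  rw [← Ext.singleFunctor_map_comp_hom]
  dsimp [ShiftedHom.homEquiv]
  rw [Category.assoc]

lemma extToHom_mk₀_comp [HasDerivedCategory.{w'} C] {X Y Z : C} (f : X ⟶ Y)
    (α : Ext.{w} Y Z 0) :
    extToHom ((Ext.mk₀ f).comp α (zero_add 0)) = f ≫ extToHom α := by
  dsimp [extToHom]
  rw [extHom₀_mk₀_comp, Functor.map_comp]
  have := (singleCompHomology C).inv.naturality f
  dsimp at this
  rw [← Category.assoc, ← Category.assoc, ← this]
  simp

/-- If `Ext¹(S.X₃, A)` vanishes, then every morphism `S.X₁ ⟶ A` extends along `S.f`. -/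
lemma exists_lift_of_ext_one {S : ShortComplex C} (hS : S.ShortExact) {A : C}
    (h1 : Subsingleton (Ext.{w} S.X₃ A 1)) (u : S.X₁ ⟶ A) :
    ∃ k : S.X₂ ⟶ A, S.f ≫ k = u := by
  obtain ⟨x₂, hx₂⟩ := Ext.contravariant_sequence_exact₁ hS A (Ext.mk₀ u) rfl
    (Subsingleton.elim _ _)
  letI := HasDerivedCategory.standard C
  refine ⟨extToHom x₂, ?_⟩
  rw [← extToHom_mk₀_comp, hx₂, extToHom_mk₀]

/-- The kernel short exact sequence coming from the snake lemma applied to a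
morphism between two short exact sequences extending an epimorphism. -/
lemma ses_kernel_of_lift {X' W A Y0 N0 : C} (f' : X' ⟶ W) (g' : W ⟶ A)
    (w1 : f' ≫ g' = 0) (h1 : (ShortComplex.mk f' g' w1).ShortExact)
    (f : W ⟶ Y0) (g : Y0 ⟶ N0) (w2 : f ≫ g = 0) (h2 : (ShortComplex.mk f g w2).ShortExact)
    (k : Y0 ⟶ A) (hk : f ≫ k = g') :
    ∃ (a : X' ⟶ kernel k) (b : kernel k ⟶ N0) (w : a ≫ b = 0),
      (ShortComplex.mk a b w).ShortExact := by
  haveI : Epi g' := h1.epi_g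
  haveI : Epi k := by
    have : Epi (f ≫ k) := by rw [hk]; infer_instance
    exact epi_of_epi f k
  haveI : Mono f := h2.mono_f
  haveI : Mono f' := h1.mono_f
  haveI : Epi (0 : N0 ⟶ (0 : C)) := ⟨fun u v _ => (isZero_zero C).eq_of_src u v⟩
  let a : X' ⟶ kernel k := kernel.lift k (f' ≫ f) (by rw [Category.assoc, hk, w1])
  let b : kernel k ⟶ N0 := kernel.ι k ≫ g
  have wab : a ≫ b = 0 := by
    dsimp only [a, b]
    rw [← Category.assoc, kernel.lift_ι, Category.assoc, w2, comp_zero]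
  let D : ShortComplex.SnakeInput C :=
    { L₀ := ShortComplex.mk a b wab
      L₁ := ShortComplex.mk f g w2
      L₂ := ShortComplex.mk (𝟙 A) (0 : A ⟶ (0 : C)) (by simp)
      L₃ := ShortComplex.mk (0 : (0 : C) ⟶ (0 : C)) (0 : (0 : C) ⟶ (0 : C)) (by simp)
      v₀₁ :=
        { τ₁ := f'
          τ₂ := kernel.ι k
          τ₃ := 𝟙 N0
          comm₁₂ := by dsimp only [a]; rw [kernel.lift_ι]
          comm₂₃ := by dsimp only [b]; simp }
      v₁₂ :=
        { τ₁ := g'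
          τ₂ := k
          τ₃ := 0
          comm₁₂ := by dsimp; rw [hk, Category.comp_id]
          comm₂₃ := by simp }
      v₂₃ :=
        { τ₁ := 0
          τ₂ := 0
          τ₃ := 0 }
      w₀₂ := by ext <;> simp [w1]
      w₁₃ := by ext <;> simp
      h₀ := by
        apply ShortComplex.isLimitOfIsLimitπ
        · exact (KernelFork.isLimitMapConeEquiv _ _).symm h1.exact.fIsKernel
        · exact (KernelFork.isLimitMapConeEquiv _ _).symm (kernelIsKernel k)
        · exact (KernelFork.isLimitMapConeEquiv _ _).symm
            (KernelFork.IsLimit.ofId (0 : N0 ⟶ (0 : C)) rfl)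
      h₃ := by
        apply ShortComplex.isColimitOfIsColimitπ
        · exact (CokernelCofork.isColimitMapCoconeEquiv _ _).symm
            (CokernelCofork.IsColimit.ofEpiOfIsZero
              (CokernelCofork.ofπ (0 : A ⟶ (0 : C)) comp_zero) ‹Epi g'› (isZero_zero C))
        · exact (CokernelCofork.isColimitMapCoconeEquiv _ _).symm
            (CokernelCofork.IsColimit.ofEpiOfIsZero
              (CokernelCofork.ofπ (0 : A ⟶ (0 : C)) comp_zero) ‹Epi k› (isZero_zero C))
        · exact (CokernelCofork.isColimitMapCoconeEquiv _ _).symm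
            (CokernelCofork.IsColimit.ofEpiOfIsZero
              (CokernelCofork.ofπ (0 : (0 : C) ⟶ (0 : C)) comp_zero)
              ‹Epi (0 : N0 ⟶ (0 : C))› (isZero_zero C))
      L₁_exact := h2.exact
      epi_L₁_g := h2.epi_g
      L₂_exact := (ShortComplex.exact_iff_epi _ rfl).2 inferInstance
      mono_L₂_f := by exact (inferInstance : Mono (𝟙 A)) }
  have hdel : D.δ = 0 := (isZero_zero C).eq_of_tgt _ _
  have hepi : Epi b := by
    have h1' := D.L₁'_exact
    rw [ShortComplex.exact_iff_epi _ hdel] at h1'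
    exact h1'
  haveI : Mono D.L₁.f := h2.mono_f
  haveI := D.mono_L₀_f
  exact ⟨a, b, wab, ShortComplex.ShortExact.mk' D.L₀_exact ‹Mono D.L₀.f› hepi⟩

/-- Objects with a finite `T`-coresolution (relative to `X`) are left orthogonal
to anything in `T^⊥`. -/
lemma coresVanish (T X : C → Prop) {A : C} (hA : rightPerp T A) :
    ∀ (n : ℕ) (M : C), CoresLen T X n M → extVanish M A := by
  intro n
  induction n with
  | zero => exact fun M hM => hA M hM.1
  | succ n ih =>
    rintro M ⟨Y0, N0, hY0, hN0, ⟨f, g, w, hse⟩, hcor⟩ i hi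
    refine subsingleton_of_forall_eq 0 (fun x => ?_)
    obtain ⟨x₂, hx₂⟩ := Ext.contravariant_sequence_exact₁ hse A x rfl (by
      haveI := ih N0 hcor (1 + i) (by omega)
      exact Subsingleton.elim _ _)
    haveI := hA Y0 hY0 i hi
    rw [← hx₂, Subsingleton.elim x₂ 0, Ext.comp_zero]

end Helpers

theorem stmt10 (X T ω : C → Prop) (hXext : ExtClosed X)
    (hgen : RelGen ω X) (hsub : ∀ W, ω W → VeeRel T X W) :
    ∀ A, rightPerp T A → X A → Fac T X 1 A := by
  intro A hA hXA
  obtain ⟨X', W, hX', hω, f', g', w1, hse1⟩ := hgen.2 A hXA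
  obtain ⟨n, hcor⟩ := hsub W hω
  cases n with
  | zero =>
    exact ⟨X', W, hX', ⟨hcor.1, hcor.2⟩, ⟨f', g', w1, hse1⟩, trivial⟩
  | succ n =>
    obtain ⟨Y0, N0, hY0T, hN0X, ⟨f, g, w2, hse2⟩, hcorN⟩ := hcor
    have hXW : X W := hgen.1 W hω
    have hXY0 : X Y0 := hXext ⟨f, g, w2, hse2⟩ hXW hN0X
    haveI hsub1 : Subsingleton (Ext.{w} N0 A 1) :=
      coresVanish T X hA n N0 hcorN 1 le_rfl
    obtain ⟨k, hk⟩ := exists_lift_of_ext_one hse2 hsub1 g'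
    haveI : Epi g' := hse1.epi_g
    haveI hek : Epi k := by
      have : Epi (f ≫ k) := by rw [hk]; infer_instance
      exact epi_of_epi f k
    obtain ⟨a, b, wab, hseK⟩ := ses_kernel_of_lift f' g' w1 hse1 f g w2 hse2 k hk
    have hXK : X (kernel k) := hXext ⟨a, b, wab, hseK⟩ hX' hN0X
    refine ⟨kernel k, Y0, hXK, ⟨hY0T, hXY0⟩,
      ⟨kernel.ι k, k, kernel.condition k, ?_⟩, trivial⟩
    exact ShortComplex.ShortExact.mk'
      (ShortComplex.exact_of_f_is_kernel _ (kernelIsKernel k)) inferInstance hek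


end RelTilting
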